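/- arXiv:2012.14306 — 2 statements merged into one kernel-verified Lean document; each statement's English description precedes it below -/
import Mathlib

section
/- Suppose E : [t₀, ∞) → ℝ is a nonnegative C¹ function satisfying E'(t) ≤ −(8/15)t⁻¹E(t) + C t^{−4/3−α} + C t^{−1−3α} for all t ≥ t₀ > 0, where C > 0 and 1/5 < α < 4/15. Then there exists a constant C' > 0 such that E(t) ≤ C' t^{−8/15} for all t ≥ t₀. -/
open Set Real

theorem stmt_4 (t₀ C α : ℝ) (ht₀ : 0 < t₀) (hC : 0 < C)
    (hα₁ : 1 / 5 < α) (hα₂ : α < 4 / 15)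
    (E E' : ℝ → ℝ)
    (hE : ∀ t ≥ t₀, HasDerivAt E (E' t) t)
    (hEnn : ∀ t ≥ t₀, 0 ≤ E t)
    (hineq : ∀ t ≥ t₀, E' t ≤ -(8 / 15) * t⁻¹ * E t
      + C * t ^ (-(4 : ℝ) / 3 - α) + C * t ^ (-1 - 3 * α)) :
    ∃ C' > 0, ∀ t ≥ t₀, E t ≤ C' * t ^ (-(8 : ℝ) / 15) := by
  have ha : (0:ℝ) < α - 1/5 := by linarith
  have hb : (0:ℝ) < 3*α - 8/15 := by linarith
  set a : ℝ := α - 1/5 with ha_def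
  set b : ℝ := 3*α - 8/15 with hb_def
  set G : ℝ → ℝ := fun t => t ^ ((8:ℝ)/15) * E t + (C/a) * t ^ (-a) + (C/b) * t ^ (-b) with hG
  have hderiv : ∀ t ∈ Ici t₀, HasDerivAt G
      ((8/15) * t ^ ((8:ℝ)/15 - 1) * E t + t ^ ((8:ℝ)/15) * E' t
        + (C/a) * (-a * t ^ (-a - 1)) + (C/b) * (-b * t ^ (-b - 1))) t := by
    intro t ht
    have htpos : 0 < t := lt_of_lt_of_le ht₀ ht
    have h1 : HasDerivAt (fun x : ℝ => x ^ ((8:ℝ)/15)) ((8/15) * t ^ ((8:ℝ)/15 - 1)) t :=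
      Real.hasDerivAt_rpow_const (Or.inl htpos.ne')
    have h2 : HasDerivAt (fun x : ℝ => x ^ (-a)) (-a * t ^ (-a - 1)) t :=
      Real.hasDerivAt_rpow_const (Or.inl htpos.ne')
    have h3 : HasDerivAt (fun x : ℝ => x ^ (-b)) (-b * t ^ (-b - 1)) t :=
      Real.hasDerivAt_rpow_const (Or.inl htpos.ne')
    exact ((h1.mul (hE t ht)).add (HasDerivAt.const_mul (C/a) h2)).add
      (HasDerivAt.const_mul (C/b) h3)
  have hderiv_nonpos : ∀ t ∈ Ici t₀,
      (8/15) * t ^ ((8:ℝ)/15 - 1) * E t + t ^ ((8:ℝ)/15) * E' t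
        + (C/a) * (-a * t ^ (-a - 1)) + (C/b) * (-b * t ^ (-b - 1)) ≤ 0 := by
    intro t ht
    have htpos : 0 < t := lt_of_lt_of_le ht₀ ht
    have hpow : (0:ℝ) < t ^ ((8:ℝ)/15) := Real.rpow_pos_of_pos htpos _
    have key : t ^ ((8:ℝ)/15) * E' t ≤
        t ^ ((8:ℝ)/15) * (-(8 / 15) * t⁻¹ * E t
          + C * t ^ (-(4 : ℝ) / 3 - α) + C * t ^ (-1 - 3 * α)) :=
      mul_le_mul_of_nonneg_left (hineq t ht) hpow.le
    have e1 : t ^ ((8:ℝ)/15) * t⁻¹ = t ^ ((8:ℝ)/15 - 1) := by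
      rw [← Real.rpow_neg_one t, ← Real.rpow_add htpos]; norm_num
    have e2 : t ^ ((8:ℝ)/15) * t ^ (-(4 : ℝ) / 3 - α) = t ^ (-a - 1) := by
      rw [← Real.rpow_add htpos, ha_def]; ring_nf
    have e3 : t ^ ((8:ℝ)/15) * t ^ (-1 - 3 * α) = t ^ (-b - 1) := by
      rw [← Real.rpow_add htpos, hb_def]; ring_nf
    have key2 : t ^ ((8:ℝ)/15) * E' t ≤
        -(8/15) * t ^ ((8:ℝ)/15 - 1) * E t + C * t ^ (-a - 1) + C * t ^ (-b - 1) := by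
      calc t ^ ((8:ℝ)/15) * E' t ≤ _ := key
        _ = -(8/15) * (t ^ ((8:ℝ)/15) * t⁻¹) * E t
            + C * (t ^ ((8:ℝ)/15) * t ^ (-(4 : ℝ) / 3 - α))
            + C * (t ^ ((8:ℝ)/15) * t ^ (-1 - 3 * α)) := by ring
        _ = _ := by rw [e1, e2, e3]
    have hca : (C/a) * (-a * t ^ (-a - 1)) = -(C * t ^ (-a - 1)) := by
      field_simp
    have hcb : (C/b) * (-b * t ^ (-b - 1)) = -(C * t ^ (-b - 1)) := by
      field_simp
    rw [hca, hcb]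
    linarith [key2]
  have hcont : ContinuousOn G (Ici t₀) := fun t ht =>
    ((hderiv t ht).continuousAt).continuousWithinAt
  have hanti : AntitoneOn G (Ici t₀) := by
    apply antitoneOn_of_deriv_nonpos (convex_Ici t₀) hcont
    · intro t ht
      rw [interior_Ici] at ht
      exact ((hderiv t (mem_Ici.mpr (le_of_lt (mem_Ioi.mp ht)))).differentiableAt).differentiableWithinAt
    · intro t ht
      rw [interior_Ici] at ht
      rw [(hderiv t (mem_Ici.mpr (le_of_lt (mem_Ioi.mp ht)))).deriv]
      exact hderiv_nonpos t (mem_Ici.mpr (le_of_lt (mem_Ioi.mp ht)))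
  refine ⟨G t₀, ?_, ?_⟩
  · have h1 : 0 ≤ t₀ ^ ((8:ℝ)/15) * E t₀ :=
      mul_nonneg (Real.rpow_pos_of_pos ht₀ _).le (hEnn t₀ le_rfl)
    have h2 : 0 < (C/a) * t₀ ^ (-a) :=
      mul_pos (div_pos hC ha) (Real.rpow_pos_of_pos ht₀ _)
    have h3 : 0 < (C/b) * t₀ ^ (-b) :=
      mul_pos (div_pos hC hb) (Real.rpow_pos_of_pos ht₀ _)
    simp only [hG]
    linarith
  · intro t ht
    have htpos : 0 < t := lt_of_lt_of_le ht₀ ht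
    have hGle : G t ≤ G t₀ := hanti self_mem_Ici ht ht
    have h2 : 0 < (C/a) * t ^ (-a) :=
      mul_pos (div_pos hC ha) (Real.rpow_pos_of_pos htpos _)
    have h3 : 0 < (C/b) * t ^ (-b) :=
      mul_pos (div_pos hC hb) (Real.rpow_pos_of_pos htpos _)
    have key : t ^ ((8:ℝ)/15) * E t ≤ G t₀ := by
      simp only [hG] at hGle ⊢
      linarith
    have hpow : (0:ℝ) < t ^ ((8:ℝ)/15) := Real.rpow_pos_of_pos htpos _
    have : E t ≤ G t₀ * t ^ (-(8:ℝ)/15) := by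
      rw [← mul_le_mul_iff_of_pos_right hpow]
      calc E t * t ^ ((8:ℝ)/15) = t ^ ((8:ℝ)/15) * E t := by ring
        _ ≤ G t₀ := key
        _ = G t₀ * t ^ (-(8:ℝ)/15) * t ^ ((8:ℝ)/15) := by
            rw [mul_assoc, ← Real.rpow_add htpos]; norm_num
    exact this
end

section
/- Suppose E : [t₀, ∞) → ℝ is a nonnegative C¹ function satisfying E'(t) ≤ −μ t⁻¹ E(t) + C t^{−1−2α} + C t^{−3−α} for all t ≥ t₀ > 0, where C > 0, 2 < α < 7/2, and 0 < μ < 2α with μ < 2 + α. Then there exists C' > 0 such that E(t) ≤ C' t^{−μ} for all t ≥ t₀. -/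
theorem stmt_5 (t₀ C α μ : ℝ) (ht₀ : 0 < t₀) (hC : 0 < C)
    (hα₁ : 2 < α) (hα₂ : α < 7 / 2)
    (hμ₀ : 0 < μ) (hμ₁ : μ < 2 * α) (hμ₂ : μ < 2 + α)
    (E E' : ℝ → ℝ)
    (hE : ∀ t ≥ t₀, HasDerivAt E (E' t) t)
    (hEnn : ∀ t ≥ t₀, 0 ≤ E t)
    (hineq : ∀ t ≥ t₀, E' t ≤ -μ * t⁻¹ * E t
      + C * t ^ (-1 - 2 * α) + C * t ^ (-3 - α)) :
    ∃ C' > 0, ∀ t ≥ t₀, E t ≤ C' * t ^ (-μ) := by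
  set p : ℝ := μ - 2 * α with hp
  set q : ℝ := μ - 2 - α with hq
  have hpneg : p < 0 := by simp [hp]; linarith
  have hqneg : q < 0 := by simp [hq]; linarith
  set G : ℝ → ℝ := fun t => C / p * t ^ p + C / q * t ^ q with hG
  set H : ℝ → ℝ := fun t => t ^ μ * E t - G t with hH
  have hpos : ∀ t ≥ t₀, (0:ℝ) < t := fun t ht => lt_of_lt_of_le ht₀ ht
  -- derivative of H
  have hHd : ∀ t ≥ t₀, HasDerivAt H
      ((μ * t ^ (μ - 1) * E t + t ^ μ * E' t)
        - (C / p * (p * t ^ (p - 1)) + C / q * (q * t ^ (q - 1)))) t := by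
    intro t ht
    have ht' : (0:ℝ) < t := hpos t ht
    have h1 : HasDerivAt (fun s : ℝ => s ^ μ) (μ * t ^ (μ - 1)) t :=
      Real.hasDerivAt_rpow_const (Or.inl ht'.ne')
    have h2 : HasDerivAt (fun s : ℝ => s ^ μ * E s)
        (μ * t ^ (μ - 1) * E t + t ^ μ * E' t) t := h1.mul (hE t ht)
    have h3 : HasDerivAt (fun s : ℝ => s ^ p) (p * t ^ (p - 1)) t :=
      Real.hasDerivAt_rpow_const (Or.inl ht'.ne')
    have h4 : HasDerivAt (fun s : ℝ => s ^ q) (q * t ^ (q - 1)) t :=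
      Real.hasDerivAt_rpow_const (Or.inl ht'.ne')
    exact h2.sub ((h3.const_mul (C / p)).add (h4.const_mul (C / q)))
  -- derivative of H is nonpositive
  have hHd0 : ∀ t ≥ t₀,
      (μ * t ^ (μ - 1) * E t + t ^ μ * E' t)
        - (C / p * (p * t ^ (p - 1)) + C / q * (q * t ^ (q - 1))) ≤ 0 := by
    intro t ht
    have ht' : (0:ℝ) < t := hpos t ht
    have hne : t ≠ 0 := ht'.ne'
    have key : t ^ μ * E' t ≤ t ^ μ * (-μ * t⁻¹ * E t
        + C * t ^ (-1 - 2 * α) + C * t ^ (-3 - α)) := by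
      apply mul_le_mul_of_nonneg_left (hineq t ht)
      positivity
    have e1 : t ^ μ * t⁻¹ = t ^ (μ - 1) := by
      rw [Real.rpow_sub ht', Real.rpow_one, div_eq_mul_inv]
    have e2 : t ^ μ * t ^ (-1 - 2 * α) = t ^ (p - 1) := by
      rw [← Real.rpow_add ht', hp]; ring_nf
    have e3 : t ^ μ * t ^ (-3 - α) = t ^ (q - 1) := by
      rw [← Real.rpow_add ht', hq]; ring_nf
    have hcp : C / p * (p * t ^ (p - 1)) = C * t ^ (p - 1) := by
      rw [show C / p * (p * t ^ (p - 1)) = C / p * p * t ^ (p - 1) by ring,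
        div_mul_cancel₀ C hpneg.ne]
    have hcq : C / q * (q * t ^ (q - 1)) = C * t ^ (q - 1) := by
      rw [show C / q * (q * t ^ (q - 1)) = C / q * q * t ^ (q - 1) by ring,
        div_mul_cancel₀ C hqneg.ne]
    have key2 : t ^ μ * E' t ≤ -μ * t ^ (μ - 1) * E t + C * t ^ (p - 1) + C * t ^ (q - 1) := by
      calc t ^ μ * E' t ≤ t ^ μ * (-μ * t⁻¹ * E t
          + C * t ^ (-1 - 2 * α) + C * t ^ (-3 - α)) := key
        _ = -μ * (t ^ μ * t⁻¹) * E t + C * (t ^ μ * t ^ (-1 - 2 * α))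
            + C * (t ^ μ * t ^ (-3 - α)) := by ring
        _ = -μ * t ^ (μ - 1) * E t + C * t ^ (p - 1) + C * t ^ (q - 1) := by
            rw [e1, e2, e3]
    rw [hcp, hcq]
    linarith
  -- H is antitone on Ici t₀
  have hanti : AntitoneOn H (Set.Ici t₀) := by
    apply antitoneOn_of_deriv_nonpos (convex_Ici t₀)
    · exact fun t ht => ((hHd t ht).continuousAt).continuousWithinAt
    · intro t ht
      rw [interior_Ici] at ht
      exact ((hHd t ht.le).differentiableAt).differentiableWithinAt
    · intro t ht
      rw [interior_Ici] at ht
      rw [(hHd t ht.le).deriv]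
      exact hHd0 t ht.le
  -- the constant
  refine ⟨t₀ ^ μ * E t₀ - G t₀, ?_, ?_⟩
  · have h1 : 0 ≤ t₀ ^ μ * E t₀ := by
      have := hEnn t₀ le_rfl
      positivity
    have h2 : G t₀ < 0 := by
      have hx : (0:ℝ) < t₀ ^ p := Real.rpow_pos_of_pos ht₀ p
      have hy : (0:ℝ) < t₀ ^ q := Real.rpow_pos_of_pos ht₀ q
      have : C / p < 0 := div_neg_of_pos_of_neg hC hpneg
      have : C / q < 0 := div_neg_of_pos_of_neg hC hqneg
      have h3 : C / p * t₀ ^ p < 0 := mul_neg_of_neg_of_pos (div_neg_of_pos_of_neg hC hpneg) hx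
      have h4 : C / q * t₀ ^ q < 0 := mul_neg_of_neg_of_pos (div_neg_of_pos_of_neg hC hqneg) hy
      simp only [hG]; linarith
    linarith
  · intro t ht
    have ht' : (0:ℝ) < t := hpos t ht
    have hHle : H t ≤ H t₀ := hanti Set.self_mem_Ici ht ht
    have hGle : G t ≤ 0 := by
      have hx : (0:ℝ) < t ^ p := Real.rpow_pos_of_pos ht' p
      have hy : (0:ℝ) < t ^ q := Real.rpow_pos_of_pos ht' q
      have h3 : C / p * t ^ p < 0 := mul_neg_of_neg_of_pos (div_neg_of_pos_of_neg hC hpneg) hx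
      have h4 : C / q * t ^ q < 0 := mul_neg_of_neg_of_pos (div_neg_of_pos_of_neg hC hqneg) hy
      simp only [hG]; linarith
    have hF : t ^ μ * E t ≤ t₀ ^ μ * E t₀ - G t₀ := by
      simp only [hH] at hHle; linarith
    have hkey : E t = t ^ (-μ) * (t ^ μ * E t) := by
      rw [← mul_assoc, ← Real.rpow_add ht']
      simp
    rw [hkey]
    have hpow : (0:ℝ) < t ^ (-μ) := Real.rpow_pos_of_pos ht' (-μ)
    calc t ^ (-μ) * (t ^ μ * E t) ≤ t ^ (-μ) * (t₀ ^ μ * E t₀ - G t₀) :=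
          mul_le_mul_of_nonneg_left hF hpow.le
      _ = (t₀ ^ μ * E t₀ - G t₀) * t ^ (-μ) := mul_comm _ _
end
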